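/- Let γ : [0,1] → ℝ be a continuous path of bounded variation with total variation L, and for x ∈ ℝ let c(x) denote the cardinality of the level set {t ∈ [0,1] : γ(t) = x} (possibly infinite). Then ∫_ℝ c(x) dx = L (Banach indicatrix / coarea formula for one-dimensional paths). -/

import Mathlib

open scoped ENNReal
open MeasureTheory Set Filter

namespace BanachIndAux

/-- Finite sets of reals have a positive separation. -/
lemma exists_sep {T : Set ℝ} (hT : T.Finite) :
    ∃ δ > (0:ℝ), ∀ a ∈ T, ∀ b ∈ T, a ≠ b → δ ≤ |a - b| := by
  classical
  set D := ((hT.toFinset ×ˢ hT.toFinset).filter (fun p => p.1 ≠ p.2)).image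
      (fun p : ℝ × ℝ => |p.1 - p.2|) with hD
  have hmem : ∀ a ∈ T, ∀ b ∈ T, a ≠ b → |a - b| ∈ D := by
    intro a ha b hb hab
    exact Finset.mem_image.mpr ⟨(a, b), Finset.mem_filter.mpr
      ⟨Finset.mem_product.mpr ⟨hT.mem_toFinset.mpr ha, hT.mem_toFinset.mpr hb⟩, hab⟩, rfl⟩
  rcases D.eq_empty_or_nonempty with h | h
  · refine ⟨1, one_pos, fun a ha b hb hab => absurd (hmem a ha b hb hab) ?_⟩
    rw [h]; exact Finset.notMem_empty _
  · refine ⟨D.min' h, ?_, fun a ha b hb hab => Finset.min'_le _ _ (hmem a ha b hb hab)⟩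
    obtain ⟨p, hp, hval⟩ := Finset.mem_image.mp (D.min'_mem h)
    rw [← hval]
    exact abs_pos.mpr (sub_ne_zero.mpr (Finset.mem_filter.mp hp).2)

variable {γ : ℝ → ℝ}

/-- Lower bound for the measure of the image of an open interval. -/
lemma edist_le_volume_image_Ioo (hcont : ContinuousOn γ (Icc 0 1))
    {a b : ℝ} (ha : 0 ≤ a) (hab : a ≤ b) (hb : b ≤ 1) :
    edist (γ a) (γ b) ≤ volume (γ '' Ioo a b) := by
  rcases eq_or_lt_of_le hab with rfl | hab'
  · simp
  have hba : 0 < b - a := sub_pos.mpr hab'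
  set c : ℕ → ℝ := fun m => a + (b - a) / (m + 2) with hc
  set d : ℕ → ℝ := fun m => b - (b - a) / (m + 2) with hd
  have hfracpos : ∀ m : ℕ, 0 < (b - a) / ((m : ℝ) + 2) := fun m => div_pos hba (by positivity)
  have hfrac2 : ∀ m : ℕ, (b - a) / ((m : ℝ) + 2) ≤ (b - a) / 2 := fun m =>
    div_le_div_of_nonneg_left hba.le two_pos (by norm_num)
  have hcmem : ∀ m, c m ∈ Ioo a b := by
    intro m
    constructor
    · simp only [hc]; have := hfracpos m; linarith
    · simp only [hc]; have := hfrac2 m; linarith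
  have hdmem : ∀ m, d m ∈ Ioo a b := by
    intro m
    constructor
    · simp only [hd]; have := hfrac2 m; linarith
    · simp only [hd]; have := hfracpos m; linarith
  have hIccsub : ∀ m, Icc (c m) (d m) ⊆ Ioo a b := fun m =>
    Icc_subset_Ioo (hcmem m).1 (hdmem m).2
  have hIoosub : Ioo a b ⊆ Icc 0 1 := fun t ht =>
    ⟨le_trans ha ht.1.le, le_trans ht.2.le hb⟩
  have hcd : ∀ m, c m ≤ d m := by
    intro m
    simp only [hc, hd]
    have := hfrac2 m
    linarith
  have key : ∀ m, edist (γ (c m)) (γ (d m)) ≤ volume (γ '' Ioo a b) := by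
    intro m
    have hsub : Icc (c m) (d m) ⊆ Ioo a b := hIccsub m
    have h1 : uIcc (γ (c m)) (γ (d m)) ⊆ γ '' Icc (c m) (d m) := by
      have := intermediate_value_uIcc (f := γ) (a := c m) (b := d m)
        (hcont.mono ((uIcc_of_le (hcd m)) ▸ (hsub.trans hIoosub)))
      rwa [uIcc_of_le (hcd m)] at this
    calc edist (γ (c m)) (γ (d m)) = volume (uIcc (γ (c m)) (γ (d m))) := by
          rw [uIcc, Real.volume_Icc, max_sub_min_eq_abs, edist_dist, Real.dist_eq,
            abs_sub_comm]
      _ ≤ volume (γ '' Icc (c m) (d m)) := measure_mono h1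
      _ ≤ volume (γ '' Ioo a b) := measure_mono (image_mono hsub)
  -- limits
  have h2 : Tendsto (fun m : ℕ => ((m : ℝ) + 2)) atTop atTop :=
    tendsto_atTop_add_const_right _ 2 tendsto_natCast_atTop_atTop
  have hz : Tendsto (fun m : ℕ => (b - a) / ((m : ℝ) + 2)) atTop (nhds 0) :=
    Tendsto.div_atTop tendsto_const_nhds h2
  have hctend : Tendsto c atTop (nhds a) := by
    have := tendsto_const_nhds (x := a) (f := atTop (α := ℕ)) |>.add hz
    simpa [hc] using this
  have hdtend : Tendsto d atTop (nhds b) := by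
    have := tendsto_const_nhds (x := b) (f := atTop (α := ℕ)) |>.sub hz
    simpa [hd] using this
  have hγc : Tendsto (fun m => γ (c m)) atTop (nhds (γ a)) := by
    refine (hcont a ⟨ha, le_trans hab hb⟩).tendsto.comp ?_
    rw [tendsto_nhdsWithin_iff]
    exact ⟨hctend, Eventually.of_forall fun m => hIoosub (hcmem m)⟩
  have hγd : Tendsto (fun m => γ (d m)) atTop (nhds (γ b)) := by
    refine (hcont b ⟨le_trans ha hab, hb⟩).tendsto.comp ?_
    rw [tendsto_nhdsWithin_iff]
    exact ⟨hdtend, Eventually.of_forall fun m => hIoosub (hdmem m)⟩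
  exact le_of_tendsto (hγc.edist hγd) (Eventually.of_forall key)

/-- The image of an open interval is measurable. -/
lemma measurableSet_image_Ioo (hcont : ContinuousOn γ (Icc 0 1))
    {a b : ℝ} (ha : 0 ≤ a) (hb : b ≤ 1) :
    MeasurableSet (γ '' Ioo a b) := by
  rcases le_or_gt b a with h | h
  · rw [Ioo_eq_empty (not_lt.mpr h)]; simp
  have hba : 0 < b - a := sub_pos.mpr h
  have hIoosub : Ioo a b ⊆ Icc 0 1 := fun t ht =>
    ⟨le_trans ha ht.1.le, le_trans ht.2.le hb⟩
  have heq : γ '' Ioo a b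
      = ⋃ m : ℕ, γ '' Icc (a + (b - a) / (m + 2)) (b - (b - a) / (m + 2)) := by
    apply Set.Subset.antisymm
    · rintro _ ⟨t, ⟨hta, htb⟩, rfl⟩
      set ε : ℝ := min (t - a) (b - t) with hε
      have hεpos : 0 < ε := lt_min (sub_pos.mpr hta) (sub_pos.mpr htb)
      obtain ⟨m, hm⟩ := exists_nat_ge ((b - a) / ε)
      have hle : (b - a) / ((m : ℝ) + 2) ≤ ε := by
        rw [div_le_iff₀ (by positivity)]
        have h1 : b - a ≤ (m : ℝ) * ε := (div_le_iff₀ hεpos).mp hm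
        nlinarith
      refine mem_iUnion.mpr ⟨m, ⟨t, ⟨?_, ?_⟩, rfl⟩⟩
      · have : ε ≤ t - a := min_le_left _ _
        linarith
      · have : ε ≤ b - t := min_le_right _ _
        linarith
    · refine iUnion_subset fun m => image_mono fun t ⟨h1, h2⟩ => ?_
      have hf : 0 < (b - a) / ((m : ℝ) + 2) := div_pos hba (by positivity)
      exact ⟨by linarith, by linarith⟩
  rw [heq]
  refine MeasurableSet.iUnion fun m => ?_
  refine (isCompact_Icc.image_of_continuousOn (hcont.mono fun t ht => ?_)).measurableSet
  have hf : 0 < (b - a) / ((m : ℝ) + 2) := div_pos hba (by positivity)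
  exact ⟨by linarith [ht.1], by linarith [ht.2]⟩

/-- Sums of indicators count filter cardinality. -/
lemma sum_indicator_eq_card (S : ℕ → Set ℝ) (n : ℕ) (x : ℝ) [DecidablePred fun i => x ∈ S i] :
    ∑ i ∈ Finset.range n, (S i).indicator (1 : ℝ → ℝ≥0∞) x
      = (((Finset.range n).filter (fun i => x ∈ S i)).card : ℝ≥0∞) := by
  rw [← Finset.sum_boole]
  exact Finset.sum_congr rfl fun i _ => by
    by_cases h : x ∈ S i <;> simp [Set.indicator_apply, h]

/-- Pointwise: the sum of indicators of images of disjoint open intervals is at most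
the Banach indicatrix. -/
lemma sum_indicator_le_encard {n : ℕ} {u : ℕ → ℝ}
    (hu : Monotone u) (hus : ∀ i, u i ∈ Icc (0:ℝ) 1) (x : ℝ) :
    ∑ i ∈ Finset.range n, (γ '' Ioo (u i) (u (i+1))).indicator (1 : ℝ → ℝ≥0∞) x
      ≤ ((Set.encard {t ∈ Icc (0:ℝ) 1 | γ t = x} : ℕ∞) : ℝ≥0∞) := by
  classical
  rw [sum_indicator_eq_card]
  set F := (Finset.range n).filter (fun i => x ∈ γ '' Ioo (u i) (u (i+1))) with hF
  set g : ℕ → ℝ := fun i => if h : x ∈ γ '' Ioo (u i) (u (i+1)) then h.choose else 0 with hg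
  have hgmem : ∀ i ∈ F, g i ∈ Ioo (u i) (u (i+1)) ∧ γ (g i) = x := by
    intro i hi
    have h := (Finset.mem_filter.mp hi).2
    simp only [hg, dif_pos h]
    exact ⟨h.choose_spec.1, h.choose_spec.2⟩
  have hmono : ∀ i j : ℕ, i < j → ∀ hi : i ∈ F, ∀ hj : j ∈ F, g i < g j := by
    intro i j hij hi hj
    calc g i < u (i+1) := (hgmem i hi).1.2
      _ ≤ u j := hu hij
      _ < g j := (hgmem j hj).1.1
  have hinj : Set.InjOn g ↑F := by
    intro i hi j hj hij
    by_contra hne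
    rcases lt_or_gt_of_ne hne with h | h
    · exact absurd hij (ne_of_lt (hmono i j h hi hj))
    · exact absurd hij.symm (ne_of_lt (hmono j i h hj hi))
  have hsubset : g '' ↑F ⊆ {t ∈ Icc (0:ℝ) 1 | γ t = x} := by
    rintro _ ⟨i, hi, rfl⟩
    obtain ⟨⟨h1, h2⟩, h3⟩ := hgmem i hi
    exact ⟨⟨le_trans (hus i).1 h1.le, le_trans h2.le (hus (i+1)).2⟩, h3⟩
  have hcard : (F.card : ℕ∞) ≤ Set.encard {t ∈ Icc (0:ℝ) 1 | γ t = x} := by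
    calc (F.card : ℕ∞) = (↑F : Set ℕ).encard := (Set.encard_coe_eq_coe_finsetCard F).symm
      _ = (g '' ↑F).encard := hinj.encard_image.symm
      _ ≤ _ := Set.encard_mono hsubset
  calc (F.card : ℝ≥0∞) = (((F.card : ℕ∞)) : ℝ≥0∞) := (ENat.toENNReal_coe _).symm
    _ ≤ _ := ENat.toENNReal_le.mpr hcard

/-- The lower bound: the variation is at most the integral of the indicatrix. -/
lemma lower_bound (hcont : ContinuousOn γ (Icc 0 1)) :
    eVariationOn γ (Icc 0 1)
      ≤ ∫⁻ x : ℝ, ((Set.encard {t ∈ Icc (0:ℝ) 1 | γ t = x} : ℕ∞) : ℝ≥0∞) := by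
  classical
  rw [eVariationOn]
  refine iSup_le ?_
  rintro ⟨n, u, hu, hus⟩
  have hmeas : ∀ i : ℕ, MeasurableSet (γ '' Ioo (u i) (u (i+1))) := fun i =>
    measurableSet_image_Ioo hcont (hus i).1 (hus (i+1)).2
  calc ∑ i ∈ Finset.range n, edist (γ (u (i+1))) (γ (u i))
      ≤ ∑ i ∈ Finset.range n, volume (γ '' Ioo (u i) (u (i+1))) := by
        refine Finset.sum_le_sum fun i _ => ?_
        rw [edist_comm]
        exact edist_le_volume_image_Ioo hcont (hus i).1 (hu (Nat.le_succ i)) (hus (i+1)).2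
    _ = ∑ i ∈ Finset.range n, ∫⁻ x, (γ '' Ioo (u i) (u (i+1))).indicator 1 x := by
        exact Finset.sum_congr rfl fun i _ => (lintegral_indicator_one (hmeas i)).symm
    _ = ∫⁻ x, ∑ i ∈ Finset.range n, (γ '' Ioo (u i) (u (i+1))).indicator 1 x :=
        (lintegral_finset_sum _ fun i _ => measurable_const.indicator (hmeas i)).symm
    _ ≤ _ := lintegral_mono fun x => sum_indicator_le_encard hu hus x

/-- Dyadic interval. -/
noncomputable def J (n i : ℕ) : Set ℝ := Icc ((i : ℝ) / 2 ^ n) (((i : ℝ) + 1) / 2 ^ n)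

lemma J_subset {n i : ℕ} (hi : i < 2 ^ n) : J n i ⊆ Icc (0:ℝ) 1 := by
  intro t ⟨h1, h2⟩
  have hpow : (0:ℝ) < 2 ^ n := by positivity
  constructor
  · refine le_trans ?_ h1
    positivity
  · refine le_trans h2 ?_
    rw [div_le_one hpow]
    have : (i : ℝ) + 1 ≤ ((2:ℕ) : ℝ) ^ n := by
      exact_mod_cast Nat.succ_le_of_lt hi
    simpa using this

/-- Index of the dyadic interval containing `t`. -/
noncomputable def idx (n : ℕ) (t : ℝ) : ℕ := min ⌊t * 2 ^ n⌋₊ (2 ^ n - 1)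

lemma idx_lt (n : ℕ) (t : ℝ) : idx n t < 2 ^ n :=
  lt_of_le_of_lt (min_le_right _ _) (Nat.sub_lt (Nat.two_pow_pos n) one_pos)

lemma mem_J_idx {n : ℕ} {t : ℝ} (ht : t ∈ Icc (0:ℝ) 1) : t ∈ J n (idx n t) := by
  have hpow : (0:ℝ) < 2 ^ n := by positivity
  have hnn : 0 ≤ t * 2 ^ n := mul_nonneg ht.1 hpow.le
  rcases le_or_gt (⌊t * 2 ^ n⌋₊) (2 ^ n - 1) with h | h
  · have hidx : idx n t = ⌊t * 2 ^ n⌋₊ := min_eq_left h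
    rw [hidx]
    constructor
    · rw [div_le_iff₀ hpow]
      exact Nat.floor_le hnn
    · rw [le_div_iff₀ hpow]
      exact (Nat.lt_floor_add_one (t * 2 ^ n)).le
  · have hidx : idx n t = 2 ^ n - 1 := min_eq_right (le_of_lt h)
    have h2 : (2:ℕ) ^ n ≤ ⌊t * 2 ^ n⌋₊ := Nat.le_of_pred_lt h
    have h3 : ((2:ℕ) ^ n : ℝ) ≤ t * 2 ^ n := le_trans (by exact_mod_cast h2) (Nat.floor_le hnn)
    have h4 : (1:ℝ) ≤ t := by
      have : ((2:ℕ) ^ n : ℝ) = 2 ^ n := by push_cast; ring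
      rw [this] at h3
      nlinarith
    have ht1 : t = 1 := le_antisymm ht.2 h4
    rw [hidx, ht1]
    have hcast : (((2:ℕ) ^ n - 1 : ℕ) : ℝ) = 2 ^ n - 1 := by
      have := Nat.one_le_two_pow (n := n)
      push_cast [Nat.cast_sub this]
      ring
    constructor
    · rw [hcast, div_le_one hpow]; linarith
    · rw [hcast, le_div_iff₀ hpow]; ring_nf; simp
  
lemma dist_le_of_mem_J {n i : ℕ} {s t : ℝ} (hs : s ∈ J n i) (ht : t ∈ J n i) :
    |s - t| ≤ 1 / 2 ^ n := by
  have hpow : (0:ℝ) < 2 ^ n := by positivity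
  obtain ⟨hs1, hs2⟩ := hs
  obtain ⟨ht1, ht2⟩ := ht
  rw [abs_sub_le_iff]
  constructor
  · have := sub_le_sub hs2 ht1
    rw [div_sub_div_same] at this
    simpa using this
  · have := sub_le_sub ht2 hs1
    rw [div_sub_div_same] at this
    simpa using this

/-- The Banach indicatrix is at most the liminf of dyadic counting functions. -/
lemma encard_le_liminf (γ : ℝ → ℝ) (x : ℝ) :
    ((Set.encard {t ∈ Icc (0:ℝ) 1 | γ t = x} : ℕ∞) : ℝ≥0∞)
      ≤ liminf (fun n => ∑ i ∈ Finset.range (2 ^ n),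
          (γ '' J n i).indicator (1 : ℝ → ℝ≥0∞) x) atTop := by
  classical
  set S := {t ∈ Icc (0:ℝ) 1 | γ t = x} with hS
  set cn : ℕ → ℝ≥0∞ := fun n => ∑ i ∈ Finset.range (2 ^ n),
      (γ '' J n i).indicator (1 : ℝ → ℝ≥0∞) x with hcn
  have key : ∀ k : ℕ, (k : ℕ∞) ≤ S.encard → ∃ N, ∀ n ≥ N, (k : ℝ≥0∞) ≤ cn n := by
    intro k hk
    obtain ⟨T, hTS, hTcard⟩ := Set.exists_subset_encard_eq hk
    have hTfin : T.Finite := Set.finite_of_encard_eq_coe hTcard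
    obtain ⟨δ, hδpos, hsep⟩ := exists_sep hTfin
    obtain ⟨N, hN⟩ := pow_unbounded_of_one_lt (1 / δ) (one_lt_two (α := ℝ))
    refine ⟨N, fun n hn => ?_⟩
    have hsmall : (1:ℝ) / 2 ^ n < δ := by
      have h1 : (1:ℝ) / δ < 2 ^ n :=
        lt_of_lt_of_le hN (pow_le_pow_right₀ one_le_two hn)
      rw [div_lt_iff₀ (by positivity)]
      rw [div_lt_iff₀ hδpos] at h1
      nlinarith
    have hinj : Set.InjOn (idx n) ↑hTfin.toFinset := by
      intro s hs t ht hst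
      by_contra hne
      have hsT : s ∈ T := hTfin.mem_toFinset.mp hs
      have htT : t ∈ T := hTfin.mem_toFinset.mp ht
      have h1 : δ ≤ |s - t| := hsep s hsT t htT hne
      have hsmem : s ∈ J n (idx n s) := mem_J_idx (hTS hsT).1
      have htmem : t ∈ J n (idx n t) := mem_J_idx (hTS htT).1
      rw [hst] at hsmem
      have h2 := dist_le_of_mem_J hsmem htmem
      linarith
    have hsubF : hTfin.toFinset.image (idx n)
        ⊆ (Finset.range (2 ^ n)).filter (fun i => x ∈ γ '' J n i) := by
      intro i hi
      obtain ⟨t, ht, rfl⟩ := Finset.mem_image.mp hi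
      have htT : t ∈ T := hTfin.mem_toFinset.mp ht
      refine Finset.mem_filter.mpr ⟨Finset.mem_range.mpr (idx_lt n t), ?_⟩
      exact ⟨t, mem_J_idx (hTS htT).1, (hTS htT).2⟩
    have hkcard : hTfin.toFinset.card = k := by
      have := hTfin.encard_eq_coe_toFinset_card
      rw [hTcard] at this
      exact_mod_cast this.symm
    have hle : k ≤ ((Finset.range (2 ^ n)).filter (fun i => x ∈ γ '' J n i)).card := by
      calc k = hTfin.toFinset.card := hkcard.symm
        _ = (hTfin.toFinset.image (idx n)).card := (Finset.card_image_of_injOn hinj).symm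
        _ ≤ _ := Finset.card_le_card hsubF
    have h0 : cn n = (((Finset.range (2 ^ n)).filter (fun i => x ∈ γ '' J n i)).card : ℝ≥0∞) :=
      sum_indicator_eq_card _ _ x
    rw [h0]
    exact_mod_cast hle
  have hlim : ∀ k : ℕ, (k : ℕ∞) ≤ S.encard → (k : ℝ≥0∞) ≤ liminf cn atTop := by
    intro k hk
    obtain ⟨N, hAll⟩ := key k hk
    rw [liminf_eq_iSup_iInf_of_nat]
    exact le_iSup_of_le N (le_iInf fun i => le_iInf fun hi => hAll i hi)
  rcases eq_or_ne S.encard ⊤ with h | h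
  · rw [h, ENat.toENNReal_top, ← ENNReal.iSup_natCast]
    exact iSup_le fun k => hlim k (by rw [h]; exact le_top)
  · lift S.encard to ℕ using h with m hm
    rw [ENat.toENNReal_coe]
    exact hlim m le_rfl

/-- Sum of variations over dyadic intervals. -/
lemma dyadic_sum (γ : ℝ → ℝ) (n : ℕ) : ∀ N ≤ 2 ^ n,
    ∑ i ∈ Finset.range N, eVariationOn γ (Icc 0 1 ∩ J n i)
      = eVariationOn γ (Icc 0 1 ∩ Icc 0 ((N : ℝ) / 2 ^ n)) := by
  intro N
  induction N with
  | zero =>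
    intro _
    simp only [Finset.range_zero, Finset.sum_empty, Nat.cast_zero, zero_div, Icc_self]
    refine (eVariationOn.subsingleton γ ?_).symm
    exact Set.Subsingleton.anti subsingleton_singleton inter_subset_right
  | succ N ih =>
    intro hN
    have hN' : N ≤ 2 ^ n := le_of_lt (Nat.lt_of_succ_le hN)
    have hpow : (0:ℝ) < 2 ^ n := by positivity
    have hNpow : (N : ℝ) ≤ 2 ^ n := by
      have : ((N:ℕ) : ℝ) ≤ ((2 ^ n : ℕ) : ℝ) := by exact_mod_cast hN'
      simpa [Nat.cast_pow] using this
    rw [Finset.sum_range_succ, ih hN']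
    have hb : (N : ℝ) / 2 ^ n ∈ Icc (0:ℝ) 1 := by
      constructor
      · positivity
      · rw [div_le_one hpow]; exact hNpow
    have := eVariationOn.Icc_add_Icc γ (s := Icc (0:ℝ) 1)
      (a := 0) (b := (N : ℝ) / 2 ^ n) (c := ((N : ℝ) + 1) / 2 ^ n)
      (by positivity) (by gcongr; linarith) hb
    rw [J]
    rw [this]
    norm_num [Nat.cast_succ]

/-- The upper bound. -/
lemma upper_bound (hcont : ContinuousOn γ (Icc 0 1)) :
    (∫⁻ x : ℝ, ((Set.encard {t ∈ Icc (0:ℝ) 1 | γ t = x} : ℕ∞) : ℝ≥0∞))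
      ≤ eVariationOn γ (Icc 0 1) := by
  classical
  set cn : ℕ → ℝ → ℝ≥0∞ := fun n x => ∑ i ∈ Finset.range (2 ^ n),
      (γ '' J n i).indicator (1 : ℝ → ℝ≥0∞) x with hcn
  have hmeasJ : ∀ n, ∀ i ∈ Finset.range (2 ^ n), MeasurableSet (γ '' J n i) := by
    intro n i hi
    exact (isCompact_Icc.image_of_continuousOn
      (hcont.mono (J_subset (Finset.mem_range.mp hi)))).measurableSet
  have hmeas : ∀ n, Measurable (cn n) := fun n =>
    Finset.measurable_sum _ fun i hi => measurable_const.indicator (hmeasJ n i hi)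
  have hint : ∀ n, (∫⁻ x, cn n x) ≤ eVariationOn γ (Icc 0 1) := by
    intro n
    have h0 : (∫⁻ x, cn n x)
        = ∑ i ∈ Finset.range (2 ^ n), ∫⁻ x, (γ '' J n i).indicator (1 : ℝ → ℝ≥0∞) x :=
      lintegral_finset_sum _ fun i hi => measurable_const.indicator (hmeasJ n i hi)
    rw [h0]
    calc ∑ i ∈ Finset.range (2 ^ n), ∫⁻ x, (γ '' J n i).indicator 1 x
        = ∑ i ∈ Finset.range (2 ^ n), volume (γ '' J n i) :=
          Finset.sum_congr rfl fun i hi => lintegral_indicator_one (hmeasJ n i hi)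
      _ ≤ ∑ i ∈ Finset.range (2 ^ n), eVariationOn γ (Icc 0 1 ∩ J n i) := by
          refine Finset.sum_le_sum fun i hi => ?_
          refine (Real.volume_le_diam _).trans (EMetric.diam_le ?_)
          rintro _ ⟨t1, ht1, rfl⟩ _ ⟨t2, ht2, rfl⟩
          exact eVariationOn.edist_le γ ⟨J_subset (Finset.mem_range.mp hi) ht1, ht1⟩
            ⟨J_subset (Finset.mem_range.mp hi) ht2, ht2⟩
      _ = eVariationOn γ (Icc 0 1 ∩ Icc 0 (((2 ^ n : ℕ) : ℝ) / 2 ^ n)) :=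
          dyadic_sum γ n (2 ^ n) le_rfl
      _ = eVariationOn γ (Icc 0 1) := by
          have hpow : (0:ℝ) < 2 ^ n := by positivity
          have : (((2 ^ n : ℕ) : ℝ) / 2 ^ n) = 1 := by
            rw [Nat.cast_pow]
            push_cast
            field_simp
          rw [this, inter_self]
  calc (∫⁻ x : ℝ, ((Set.encard {t ∈ Icc (0:ℝ) 1 | γ t = x} : ℕ∞) : ℝ≥0∞))
      ≤ ∫⁻ x, liminf (fun n => cn n x) atTop := lintegral_mono fun x => encard_le_liminf γ x
    _ ≤ liminf (fun n => ∫⁻ x, cn n x) atTop := lintegral_liminf_le hmeas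
    _ ≤ eVariationOn γ (Icc 0 1) := by
        rw [liminf_eq_iSup_iInf_of_nat]
        exact iSup_le fun N => le_trans (iInf₂_le N le_rfl) (hint N)

end BanachIndAux

/-- Banach indicatrix / coarea formula: for a continuous path `γ : [0,1] → ℝ` of bounded
variation, the integral over `ℝ` of the cardinality of the level sets equals the total
variation of `γ`. -/
theorem banach_indicatrix (γ : ℝ → ℝ)
    (hcont : ContinuousOn γ (Set.Icc 0 1))
    (hbv : eVariationOn γ (Set.Icc 0 1) ≠ ⊤) :
    ∫⁻ x : ℝ, ((Set.encard {t ∈ Set.Icc (0:ℝ) 1 | γ t = x} : ℕ∞) : ℝ≥0∞)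
      = eVariationOn γ (Set.Icc 0 1) :=
  le_antisymm (BanachIndAux.upper_bound hcont) (BanachIndAux.lower_bound hcont)
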